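/- Let μ be a positive real number that is an algebraic integer (i.e., integral over ℤ). Suppose that every complex root of the minimal polynomial of μ over ℚ has absolute value equal to μ. Then there exist positive integers a and n with μ^n = a; in fact one may take n = d, the degree of the minimal polynomial of μ over ℚ, so that μ^d is a positive integer. -/

import Mathlib

theorem stmt4 (μ : ℝ) (hpos : 0 < μ) (hint : IsIntegral ℤ μ)
    (hconj : ∀ z : ℂ, Polynomial.aeval z (minpoly ℚ μ) = 0 → ‖z‖ = μ) :
    0 < (minpoly ℚ μ).natDegree ∧
      ∃ a : ℕ, 0 < a ∧ μ ^ (minpoly ℚ μ).natDegree = (a : ℝ) := by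
  have hQ : IsIntegral ℚ μ := hint.tower_top
  set p := minpoly ℚ μ with hp
  have hdpos : 0 < p.natDegree := minpoly.natDegree_pos hQ
  refine ⟨hdpos, ?_⟩
  -- map to ℂ
  set P : Polynomial ℂ := p.map (algebraMap ℚ ℂ) with hP
  have hmo : p.Monic := minpoly.monic hQ
  have hPmo : P.Monic := hmo.map _
  have hsplit : P.Splits := IsAlgClosed.splits _
  have hdeg : P.natDegree = p.natDegree := (Polynomial.natDegree_map_eq_of_injective
    (algebraMap ℚ ℂ).injective p)
  have hcard : Multiset.card P.roots = p.natDegree := by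
    rw [← hdeg]
    exact (Polynomial.splits_iff_card_roots.1 hsplit)
  have hc0 : P.coeff 0 = (-1) ^ P.natDegree * P.roots.prod :=
    hsplit.coeff_zero_eq_prod_roots_of_monic hPmo
  have habs : ‖P.coeff 0‖ = μ ^ p.natDegree := by
    rw [hc0, norm_mul, norm_pow, norm_neg, norm_one, one_pow, one_mul]
    have : (P.roots.map (‖·‖)).prod = μ ^ p.natDegree := by
      have hall : ∀ x ∈ P.roots.map (‖·‖), x = μ := by
        intro x hx
        obtain ⟨z, hz, rfl⟩ := Multiset.mem_map.1 hx
        apply hconj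
        have hz' := Polynomial.isRoot_of_mem_roots hz
        rwa [Polynomial.IsRoot, Polynomial.eval_map, ← Polynomial.aeval_def] at hz'
      have : P.roots.map (‖·‖) = Multiset.replicate p.natDegree μ := by
        rw [Multiset.eq_replicate]
        exact ⟨by rw [Multiset.card_map, hcard], hall⟩
      rw [this, Multiset.prod_replicate]
    rw [← this]; exact (Multiset.prod_hom P.roots (normHom : ℂ →*₀ ℝ)).symm
  -- coeff 0 is an integer
  have hpz : p = (minpoly ℤ μ).map (algebraMap ℤ ℚ) :=
    minpoly.isIntegrallyClosed_eq_field_fractions ℚ ℝ hint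
  set m : ℤ := (minpoly ℤ μ).coeff 0 with hm
  have hcoeff : P.coeff 0 = (m : ℂ) := by
    rw [hP, Polynomial.coeff_map, hpz, Polynomial.coeff_map]
    simp [hm]
  have hmabs : (|m| : ℝ) = μ ^ p.natDegree := by
    rw [← habs, hcoeff]
    rw [Complex.norm_intCast]
  refine ⟨m.natAbs, ?_, ?_⟩
  · rcases Nat.eq_zero_or_pos m.natAbs with h | h
    · exfalso
      have : (|m| : ℝ) = 0 := by
        rw [abs_eq_zero] ; exact_mod_cast Int.natAbs_eq_zero.mp h
      rw [hmabs] at this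
      exact absurd this (by positivity)
    · exact h
  · rw [← hmabs, Nat.cast_natAbs, Int.cast_abs]
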